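/- Let V₁, V₂ be subspaces of a finite-dimensional complex inner product space E with W := V₂ ∩ V₁⊥ = {0} (the non-intersection condition). Then for every z ∈ ℂ the kernel of T_{V₂}(z) ∘ T_{V₁}(z) is {0} if z ≠ 0, and equals V₁ if z = 0. -/

import Mathlib

noncomputable def projL {E : Type*} [NormedAddCommGroup E] [InnerProductSpace ℂ E]
    [FiniteDimensional ℂ E] (V : Submodule ℂ E) : E →ₗ[ℂ] E :=
  V.subtype ∘ₗ (V.orthogonalProjection).toLinearMap

noncomputable def TV {E : Type*} [NormedAddCommGroup E] [InnerProductSpace ℂ E]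
    [FiniteDimensional ℂ E] (V : Submodule ℂ E) (z : ℂ) : E →ₗ[ℂ] E :=
  z • projL V + projL Vᗮ

variable {E : Type*} [NormedAddCommGroup E] [InnerProductSpace ℂ E] [FiniteDimensional ℂ E]

lemma projL_apply (V : Submodule ℂ E) (x : E) :
    projL V x = (Submodule.orthogonalProjection V x : E) := rfl

lemma ker_TV (V : Submodule ℂ E) {z : ℂ} (hz : z ≠ 0) : LinearMap.ker (TV V z) = ⊥ := by
  rw [eq_bot_iff]
  intro x hx
  have hx' : z • (Submodule.orthogonalProjection V x : E) + (Submodule.orthogonalProjection Vᗮ x : E) = 0 := hx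
  set a : E := (Submodule.orthogonalProjection V x : E) with ha
  set b : E := (Submodule.orthogonalProjection Vᗮ x : E) with hbdef
  have hxab : a + b = x := Submodule.starProjection_add_starProjection_orthogonal (K := V) x
  have hb : b = -(z • a) := eq_neg_of_add_eq_zero_right hx'
  have hbV : b ∈ V := by
    rw [hb]
    exact V.neg_mem (V.smul_mem z (SetLike.coe_mem _))
  have hbO : b ∈ Vᗮ := SetLike.coe_mem _
  have hb0 : b = 0 := by
    have hmem : b ∈ V ⊓ Vᗮ := ⟨hbV, hbO⟩
    rwa [(V.orthogonal_disjoint).eq_bot, Submodule.mem_bot] at hmem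
  have ha0 : a = 0 := by
    have hza : z • a = 0 := by
      have := hb; rw [hb0] at this
      exact (neg_eq_zero.mp this.symm)
    rcases smul_eq_zero.mp hza with h | h
    · exact absurd h hz
    · exact h
  simp [Submodule.mem_bot, ← hxab, ha0, hb0]

theorem ker_TV_comp (V₁ V₂ : Submodule ℂ E) (h : V₂ ⊓ V₁ᗮ = ⊥) (z : ℂ) :
    (z ≠ 0 → LinearMap.ker (TV V₂ z ∘ₗ TV V₁ z) = ⊥) ∧
    LinearMap.ker (TV V₂ 0 ∘ₗ TV V₁ 0) = V₁ := by
  constructor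
  · intro hz
    rw [LinearMap.ker_comp, ker_TV V₂ hz, Submodule.comap_bot, ker_TV V₁ hz]
  · have hT0 : ∀ V : Submodule ℂ E, TV V 0 = projL Vᗮ := by
      intro V; simp [TV]
    ext x
    simp only [LinearMap.mem_ker, LinearMap.comp_apply, hT0, projL_apply]
    constructor
    · intro hx
      have h2 : Submodule.orthogonalProjection V₂ᗮ ((Submodule.orthogonalProjection V₁ᗮ x : E)) = 0 :=
        Submodule.coe_eq_zero.mp hx
      have hy2 : ((Submodule.orthogonalProjection V₁ᗮ x : E)) ∈ V₂ := by
        have := Submodule.orthogonalProjectionOnto_eq_zero_iff.mp h2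
        rwa [Submodule.orthogonal_orthogonal] at this
      have hy1 : ((Submodule.orthogonalProjection V₁ᗮ x : E)) ∈ V₁ᗮ := SetLike.coe_mem _
      have hy0 : ((Submodule.orthogonalProjection V₁ᗮ x : E)) = 0 := by
        have hmem : ((Submodule.orthogonalProjection V₁ᗮ x : E)) ∈ V₂ ⊓ V₁ᗮ := ⟨hy2, hy1⟩
        rwa [h, Submodule.mem_bot] at hmem
      have : Submodule.orthogonalProjection V₁ᗮ x = 0 := Submodule.coe_eq_zero.mp hy0
      have := Submodule.orthogonalProjectionOnto_eq_zero_iff.mp this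
      rwa [Submodule.orthogonal_orthogonal] at this
    · intro hx
      have h1 : Submodule.orthogonalProjection V₁ᗮ x = 0 :=
        Submodule.orthogonalProjectionOnto_eq_zero_iff.mpr (V₁.le_orthogonal_orthogonal hx)
      rw [h1]
      simp
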